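/- In the deleting-voters construction, if w can be made the unique fallback voting winner by deleting at most k voters, then w wins by overall score (not by strict majority), every candidate b ∈ B loses at least one approval among the deleted voters, and consequently the set {b_i : v_i deleted} ∪ (arbitrary completion to size k) witnesses that G has a dominating set of size at most k. -/

import Mathlib

/- Fallback voting framework.  A ballot is the linearly ordered list of a voter's
approved candidates (most preferred first); an election is a list of ballots. -/
namespace FV

variable {α : Type*} [DecidableEq α]

/-- The level-`i` score of candidate `c`: the number of voters who approve `c`
and rank `c` among their top `i` approved candidates. -/
def levelScore (V : List (List α)) (i : ℕ) (c : α) : ℕ :=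
  (V.filter (fun b => decide (c ∈ b.take i))).length

/-- The overall approval score of candidate `c`. -/
def score (V : List (List α)) (c : α) : ℕ :=
  (V.filter (fun b => decide (c ∈ b))).length

/-- `c` has a strict majority of approvals at level `i`. -/
def MajAt (V : List (List α)) (i : ℕ) (c : α) : Prop :=
  2 * levelScore V i c > V.length

/-- `c` is a fallback voting winner of the election with candidate set `Cs`
and voter list `V`:  either at the first level (up to `‖Cs‖`) at which some
candidate attains a strict majority, `c` has a strict majority and maximal
level score among strict-majority candidates; or no candidate ever attains a
strict majority and `c` has maximal overall approval score. -/
def FVWinner (Cs : Finset α) (V : List (List α)) (c : α) : Prop :=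
  c ∈ Cs ∧
    ((∃ i, 1 ≤ i ∧ i ≤ Cs.card ∧ MajAt V i c ∧
        (∀ j, j < i → ∀ d ∈ Cs, ¬ MajAt V j d) ∧
        (∀ d ∈ Cs, MajAt V i d → levelScore V i d ≤ levelScore V i c)) ∨
     ((∀ i, i ≤ Cs.card → ∀ d ∈ Cs, ¬ MajAt V i d) ∧
        ∀ d ∈ Cs, score V d ≤ score V c))

/-- `c` is the unique fallback voting winner. -/
def UniqueFVWinner (Cs : Finset α) (V : List (List α)) (c : α) : Prop :=
  FVWinner Cs V c ∧ ∀ d, FVWinner Cs V d → d = c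

end FV

/- The deleting-voters construction.  Candidates are `Option (Fin n)`:
`some b` is the vertex candidate for `b` and `none` is the distinguished
candidate `w`.  For each `i`, voter `vᵢ` approves the candidates of
`N_c[bᵢ]` (enumerated by `M i`); for each `i` there is a voter approving
`B − N_c[bᵢ]` (enumerated by `L i`) followed by `w`; and there are `k`
voters approving nothing. -/
namespace DV

/-- The ballot of voter `vᵢ`, approving `N_c[bᵢ]`. -/
def vballot {n : ℕ} (M : Fin n → List (Fin n)) (i : Fin n) : List (Option (Fin n)) :=
  (M i).map some

/-- The ballot approving `B − N_c[bᵢ]` and then `w`. -/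
def wballot {n : ℕ} (L : Fin n → List (Fin n)) (i : Fin n) : List (Option (Fin n)) :=
  (L i).map some ++ [none]

/-- The full voter list of the construction. -/
def delElection {n : ℕ} (k : ℕ) (M L : Fin n → List (Fin n)) :
    List (List (Option (Fin n))) :=
  (List.finRange n).map (vballot M) ++ (List.finRange n).map (wballot L) ++
    List.replicate k ([] : List (Option (Fin n)))

/-- The voter list obtained by deleting exactly the voters `vᵢ` for `i ∈ B'`. -/
def delElectionMinus {n : ℕ} (k : ℕ) (M L : Fin n → List (Fin n))
    (B' : Finset (Fin n)) : List (List (Option (Fin n))) :=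
  ((List.finRange n).filter (fun i => decide (i ∉ B'))).map (vballot M) ++
    (List.finRange n).map (wballot L) ++
    List.replicate k ([] : List (Option (Fin n)))

end DV


section Aux

variable {α : Type*} [DecidableEq α]

lemma levelScore_le_score (V : List (List α)) (i : ℕ) (c : α) :
    FV.levelScore V i c ≤ FV.score V c := by
  apply List.Sublist.length_le
  apply List.monotone_filter_right
  intro b hb
  simp only [decide_eq_true_eq] at hb ⊢
  exact List.take_subset i b hb

lemma score_append (V W : List (List α)) (c : α) :
    FV.score (V ++ W) c = FV.score V c + FV.score W c := by
  simp [FV.score, List.filter_append]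

lemma score_map {β : Type*} (f : β → List α) (l : List β) (c : α) :
    FV.score (l.map f) c = (l.filter (fun i => decide (c ∈ f i))).length := by
  unfold FV.score
  rw [List.filter_map, List.length_map]
  rfl

lemma score_eq_zero (V : List (List α)) (c : α) (h : ∀ b ∈ V, b = []) :
    FV.score V c = 0 := by
  unfold FV.score
  rw [List.filter_eq_nil_iff.2 (fun b hb => by rw [h b hb]; simp)]
  rfl

end Aux

/-- if deleting at most `k` voters makes `w` the unique
fallback winner, then `w` wins by overall score (it never attains a strict
majority at any level), every vertex candidate has strictly smaller overall
score than `w` (so loses at least one approval among the deleted voters),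
and `G` has a dominating set of size at most `k`. -/
theorem fv_deleting_voters_winner_gives_dominating_set {n k : ℕ} (hk : 0 < k)
    (G : SimpleGraph (Fin n)) [DecidableRel G.Adj]
    (M L : Fin n → List (Fin n))
    (hMnd : ∀ i, (M i).Nodup) (hLnd : ∀ i, (L i).Nodup)
    (hMmem : ∀ i b, b ∈ M i ↔ (b = i ∨ G.Adj i b))
    (hLmem : ∀ i b, b ∈ L i ↔ ¬ (b = i ∨ G.Adj i b))
    (V' : List (List (Option (Fin n))))
    (hsub : V'.Sublist (DV.delElection k M L))
    (hdel : (DV.delElection k M L).length ≤ V'.length + k)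
    (hwin : FV.UniqueFVWinner Finset.univ V' (none : Option (Fin n))) :
    (∀ i, ¬ FV.MajAt V' i (none : Option (Fin n))) ∧
    (∀ b : Fin n, FV.score V' (some b) < FV.score V' (none : Option (Fin n))) ∧
    (∃ B'' : Finset (Fin n), B''.card ≤ k ∧ ∀ u, ∃ v ∈ B'', u = v ∨ G.Adj v u) := by
    classical
  -- decompose V' along the three blocks of the election
  rcases List.sublist_append_iff.1 hsub with ⟨V12, V3, hV'eq, hs12, hs3⟩
  rcases List.sublist_append_iff.1 hs12 with ⟨V1, V2, hV12eq, hs1, hs2⟩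
  rcases List.sublist_map_iff.1 hs1 with ⟨S, hS, rfl⟩
  rcases List.sublist_map_iff.1 hs2 with ⟨T, hT, rfl⟩
  have hSlen : S.length ≤ n := by simpa using hS.length_le
  have hTlen : T.length ≤ n := by simpa using hT.length_le
  have hV3len : V3.length ≤ k := by simpa using hs3.length_le
  have hlen : V'.length = S.length + T.length + V3.length := by
    rw [hV'eq, hV12eq]; simp [List.length_append]; omega
  have hbig : 2 * n ≤ V'.length := by
    have : (DV.delElection k M L).length = n + n + k := by
      simp [DV.delElection]; omega
    omega
  -- score formula
  have hV3z : ∀ c : Option (Fin n), FV.score V3 c = 0 := by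
    intro c
    apply score_eq_zero
    intro b hb
    have := hs3.subset hb
    simpa using List.eq_of_mem_replicate this
  have hscore : ∀ c : Option (Fin n), FV.score V' c =
      (S.filter (fun i => decide (c ∈ DV.vballot M i))).length +
      (T.filter (fun i => decide (c ∈ DV.wballot L i))).length := by
    intro c
    rw [hV'eq, hV12eq, score_append, score_append, score_map, score_map, hV3z,
      Nat.add_zero]
    congr 1 <;>
    · apply congrArg
      apply List.filter_congr
      intro i _
      exact decide_eq_decide.2 Iff.rfl
  -- score of w
  have hscw : FV.score V' none = T.length := by
    rw [hscore]
    have h1 : S.filter (fun i => decide ((none : Option (Fin n)) ∈ DV.vballot M i)) = [] := by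
      apply List.filter_eq_nil_iff.2; intro i _; simp [DV.vballot]
    have h2 : T.filter (fun i => decide ((none : Option (Fin n)) ∈ DV.wballot L i)) = T := by
      apply List.filter_eq_self.2; intro i _; simp [DV.wballot]
    rw [h1, h2]; simp
  -- score of a vertex candidate
  have hscb : ∀ b : Fin n, FV.score V' (some b) =
      (S.filter (fun i => decide (b ∈ M i))).length +
      (T.filter (fun i => decide (b ∈ L i))).length := by
    intro b
    rw [hscore]
    congr 2
    · apply List.filter_congr; intro i _; simp [DV.vballot]
    · apply List.filter_congr; intro i _; simp [DV.wballot]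
  -- complementarity on the full range
  have hLM : ∀ (b : Fin n), (fun i => decide (b ∈ L i)) =
      (fun i => !decide (b ∈ M i)) := by
    intro b; funext i
    simp [hLmem, hMmem]
  have hcompl : ∀ b : Fin n,
      ((List.finRange n).filter (fun i => decide (b ∈ M i))).length +
      ((List.finRange n).filter (fun i => decide (b ∈ L i))).length = n := by
    intro b
    rw [hLM b]
    have := (List.finRange n).length_eq_length_filter_add (fun i => decide (b ∈ M i))
    simp only [List.length_finRange] at this
    omega
  -- every candidate has overall score at most n
  have hscn : ∀ c : Option (Fin n), FV.score V' c ≤ n := by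
    intro c
    cases c with
    | none => rw [hscw]; exact hTlen
    | some b =>
      rw [hscb b]
      have h1 := (hS.filter (fun i => decide (b ∈ M i))).length_le
      have h2 := (hT.filter (fun i => decide (b ∈ L i))).length_le
      have := hcompl b
      omega
  -- no candidate ever attains a strict majority
  have hnomaj : ∀ (j : ℕ) (d : Option (Fin n)), ¬ FV.MajAt V' j d := by
    intro j d hmaj
    have h1 := levelScore_le_score V' j d
    have h2 := hscn d
    have := hmaj
    unfold FV.MajAt at this
    omega
  obtain ⟨⟨-, hcase⟩, huniq⟩ := hwin
  have hmax : ∀ d : Option (Fin n), FV.score V' d ≤ FV.score V' none := by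
    rcases hcase with ⟨i, -, -, hmaj, -, -⟩ | ⟨-, hmax⟩
    · exact absurd hmaj (hnomaj i none)
    · exact fun d => hmax d (Finset.mem_univ d)
  -- strict inequality via uniqueness
  have hstrict : ∀ b : Fin n, FV.score V' (some b) < FV.score V' none := by
    intro b
    rcases lt_or_eq_of_le (hmax (some b)) with h | h
    · exact h
    · exfalso
      have hwb : FV.FVWinner Finset.univ V' (some b) :=
        ⟨Finset.mem_univ _, Or.inr ⟨fun i _ d _ => hnomaj i d,
          fun d _ => (hmax d).trans h.ge⟩⟩
      exact Option.some_ne_none b (huniq _ hwb)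
  refine ⟨fun i => hnomaj i none, hstrict, ?_⟩
  -- every vertex loses a v-voter approval: some i with b ∈ M i is deleted
  have hdom : ∀ b : Fin n, ∃ i : Fin n, b ∈ M i ∧ i ∉ S := by
    intro b
    by_contra h
    push_neg at h
    have hsb := hstrict b
    rw [hscw, hscb b] at hsb
    -- bound the T part
    have hTsplit := T.length_eq_length_filter_add (fun i => decide (b ∈ L i))
    have hTnot : (T.filter (fun i => !decide (b ∈ L i))).length ≤
        ((List.finRange n).filter (fun i => decide (b ∈ M i))).length := by
      have h1 : (T.filter (fun i => !decide (b ∈ L i))).length ≤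
          ((List.finRange n).filter (fun i => !decide (b ∈ L i))).length :=
        (hT.filter _).length_le
      have h2 : (List.finRange n).filter (fun i => !decide (b ∈ L i)) =
          (List.finRange n).filter (fun i => decide (b ∈ M i)) := by
        apply List.filter_congr; intro i _
        simp [hLmem, hMmem]
      rw [h2] at h1; exact h1
    have hlt : (S.filter (fun i => decide (b ∈ M i))).length <
        ((List.finRange n).filter (fun i => decide (b ∈ M i))).length := by omega
    -- but all approvers of b remain in S, contradiction
    have hsubset : (List.finRange n).filter (fun i => decide (b ∈ M i)) ⊆
        S.filter (fun i => decide (b ∈ M i)) := by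
      intro i hi
      rw [List.mem_filter] at hi ⊢
      refine ⟨h i (by simpa using hi.2), hi.2⟩
    have hnd : ((List.finRange n).filter (fun i => decide (b ∈ M i))).Nodup :=
      (List.nodup_finRange n).filter _
    have := (hnd.subperm hsubset).length_le
    have hle := (S.filter (fun i => decide (b ∈ M i))).length_filter_le
    omega
  -- the dominating set
  have hSnd : S.Nodup := hS.nodup (List.nodup_finRange n)
  refine ⟨Finset.univ \ S.toFinset, ?_, ?_⟩
  · have hcard : (Finset.univ \ S.toFinset).card =
        Finset.univ.card - S.toFinset.card :=
      Finset.card_sdiff_of_subset (Finset.subset_univ _)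
    rw [hcard, List.toFinset_card_of_nodup hSnd, Finset.card_univ, Fintype.card_fin]
    omega
  · intro u
    obtain ⟨i, hui, hiS⟩ := hdom u
    refine ⟨i, ?_, (hMmem i u).1 hui⟩
    rw [Finset.mem_sdiff]
    exact ⟨Finset.mem_univ _, fun hc => hiS (List.mem_toFinset.1 hc)⟩
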